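/- Let S be a proper *-semigroup. Then: (i) each of P(S)^L, P(S)^⊥ and P(S)^∇ is closed under arbitrary intersections; (ii) the map T ↦ T ∩ T* is an inclusion-preserving bijection from P(S)^L onto P(S)^⊥ with inverse T ↦ √T, and it satisfies T^L ∩ (T^L)* = (T ∩ T*)^⊥ for every T ∈ P(S)^L; (iii) P(S)^∇ = P(S)^L ∩ P(S)^⊥ = {T ∈ P(S)^L : T = T*} = {T ∈ P(S)^⊥ : S T ⊆ T}. -/

import Mathlib

namespace Stmt4

/-- `T* = {t* : t ∈ T}`. -/
def starSet {S : Type*} [Star S] (T : Set S) : Set S := star '' T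

/-- `√T = {s : s* s ∈ T}`. -/
def sqrtS {S : Type*} [Mul S] [Star S] (T : Set S) : Set S := {s | star s * s ∈ T}

/-- The left annihilator `T^L`. -/
def lAnn {S : Type*} [Mul S] [Star S] [Zero S] (T : Set S) : Set S :=
  {s | ∀ t ∈ T, t * star s = 0}

/-- The *-annihilator `T^⊥`. -/
def pAnn {S : Type*} [Mul S] [Star S] [Zero S] (T : Set S) : Set S :=
  {s | ∀ t ∈ T, t * star s = 0 ∧ t * s = 0}

/-- The annihilator ideal `T^∇`. -/
def nAnn {S : Type*} [Mul S] [Star S] [Zero S] (T : Set S) : Set S :=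
  {s | ∀ t ∈ T, ∀ u : S, t * u * s = 0}

/-- `P(S)^L = {T^L : T ⊆ S}`. -/
def PL (S : Type*) [Mul S] [Star S] [Zero S] : Set (Set S) := {A | ∃ T : Set S, A = lAnn T}

/-- `P(S)^⊥ = {T^⊥ : T ⊆ S}`. -/
def Pperp (S : Type*) [Mul S] [Star S] [Zero S] : Set (Set S) := {A | ∃ T : Set S, A = pAnn T}

/-- `P(S)^∇ = {T^∇ : T ⊆ S}`. -/
def Pnabla (S : Type*) [Mul S] [Star S] [Zero S] : Set (Set S) := {A | ∃ T : Set S, A = nAnn T}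

section
variable {S : Type*} [SemigroupWithZero S] [StarMul S]

lemma mem_starSet {T : Set S} {s : S} : s ∈ starSet T ↔ star s ∈ T := by
  constructor
  · rintro ⟨t, ht, rfl⟩; simpa using ht
  · intro h; exact ⟨star s, h, star_star s⟩

variable (hp : ∀ s : S, star s * s = 0 → s = 0)

lemma star_zero' (hp : ∀ s : S, star s * s = 0 → s = 0) : star (0:S) = 0 :=
  hp (star 0) (by rw [star_star, zero_mul])

lemma proper' (hp : ∀ s : S, star s * s = 0 → s = 0) (x : S) (h : x * star x = 0) : x = 0 := by
  have h1 : star x = 0 := hp (star x) (by simpa using h)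
  have h2 := congrArg star h1
  rwa [star_star, star_zero' hp] at h2

lemma cancel_right (hp : ∀ s : S, star s * s = 0 → s = 0) {a b : S} (h : a * b * star b = 0) : a * b = 0 := by
  apply proper' hp
  have : a * b * star (a * b) = a * b * star b * star a := by
    rw [star_mul, ← mul_assoc]
  rw [this, h, zero_mul]

lemma cancel_right' (hp : ∀ s : S, star s * s = 0 → s = 0) {a b : S} (h : a * star b * b = 0) : a * star b = 0 := by
  have := cancel_right hp (b := star b) (by simpa using h)
  exact this

lemma swap (hp : ∀ s : S, star s * s = 0 → s = 0) {a b : S} (h : a * star b = 0) : b * star a = 0 := by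
  apply hp
  have : star (b * star a) * (b * star a) = (a * star b) * (b * star a) := by
    rw [star_mul, star_star]
  rw [this, h, zero_mul]

end

section
variable {S : Type*} [SemigroupWithZero S] [StarMul S]

lemma pAnn_eq (V : Set S) : pAnn V = lAnn V ∩ starSet (lAnn V) := by
  ext s
  constructor
  · intro h
    refine ⟨fun t ht => (h t ht).1, mem_starSet.2 ?_⟩
    intro t ht
    rw [star_star]
    exact (h t ht).2
  · rintro ⟨h1, h2⟩ t ht
    have h3 := mem_starSet.1 h2 t ht
    rw [star_star] at h3
    exact ⟨h1 t ht, h3⟩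

lemma sqrt_pAnn (hp : ∀ s : S, star s * s = 0 → s = 0) (W : Set S) :
    sqrtS (pAnn W) = lAnn W := by
  ext s
  constructor
  · intro h t ht
    have h2 := (h t ht).2
    exact cancel_right' hp (by rwa [← mul_assoc] at h2)
  · intro h t ht
    have h1 : t * (star s * s) = 0 := by rw [← mul_assoc, h t ht, zero_mul]
    refine ⟨?_, h1⟩
    rw [star_mul, star_star]
    exact h1

lemma sqrt_inter (hp : ∀ s : S, star s * s = 0 → s = 0) (V : Set S) :
    sqrtS (lAnn V ∩ starSet (lAnn V)) = lAnn V := by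
  rw [← pAnn_eq, sqrt_pAnn hp]

lemma pAnn_inter (hp : ∀ s : S, star s * s = 0 → s = 0) (V : Set S) :
    pAnn (lAnn V ∩ starSet (lAnn V)) = pAnn (lAnn V) := by
  ext s
  constructor
  · intro h t ht
    have hA : star t * t ∈ lAnn V := by
      intro v hv
      rw [star_mul, star_star, ← mul_assoc, ht v hv, zero_mul]
    have hmem : star t * t ∈ lAnn V ∩ starSet (lAnn V) :=
      ⟨hA, mem_starSet.2 (by rwa [star_mul, star_star])⟩
    obtain ⟨h1, h2⟩ := h _ hmem
    constructor
    · apply hp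
      rw [star_mul, star_star, mul_assoc, ← mul_assoc (star t) t (star s), h1, mul_zero]
    · apply hp
      rw [star_mul, mul_assoc, ← mul_assoc (star t) t s, h2, mul_zero]
  · intro h t ht
    exact h t ht.1

def mulS (T : Set S) : Set S := {x : S | ∃ t ∈ T, ∃ u : S, x = t * u}

lemma nAnn_star (hp : ∀ s : S, star s * s = 0 → s = 0) {T : Set S} {s : S}
    (h : s ∈ nAnn T) : star s ∈ nAnn T := by
  intro t ht u
  apply proper' hp
  have e : (t * u * star s) * star (t * u * star s) = (t * (u * star s) * s) * (star u * star t) := by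
    simp [star_mul, star_star, mul_assoc]
  rw [e, h t ht (u * star s), zero_mul]

lemma nAnn_left {T : Set S} {s : S} (h : s ∈ nAnn T) (u : S) : u * s ∈ nAnn T := by
  intro t ht v
  have e : t * v * (u * s) = t * (v * u) * s := by simp [mul_assoc]
  rw [e, h t ht (v * u)]

lemma nAnn_eq_lAnn (hp : ∀ s : S, star s * s = 0 → s = 0) (T : Set S) :
    nAnn T = lAnn (mulS T) := by
  ext s
  constructor
  · rintro h x ⟨t, ht, u, rfl⟩
    exact nAnn_star hp h t ht u
  · intro h t ht u
    have hs : star s ∈ nAnn T := fun t' ht' u' => h (t' * u') ⟨t', ht', u', rfl⟩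
    have h2 := nAnn_star hp hs t ht u
    rwa [star_star] at h2

lemma nAnn_eq_pAnn (hp : ∀ s : S, star s * s = 0 → s = 0) (T : Set S) :
    nAnn T = pAnn (mulS T) := by
  ext s
  constructor
  · rintro h x ⟨t, ht, u, rfl⟩
    exact ⟨nAnn_star hp h t ht u, h t ht u⟩
  · intro h t ht u
    exact (h (t * u) ⟨t, ht, u, rfl⟩).2

lemma nAnn_starClosed (hp : ∀ s : S, star s * s = 0 → s = 0) (T : Set S) :
    starSet (nAnn T) = nAnn T := by
  ext s
  rw [mem_starSet]
  constructor
  · intro h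
    have := nAnn_star hp h
    rwa [star_star] at this
  · exact nAnn_star hp

lemma pAnn_starClosed (W : Set S) : starSet (pAnn W) = pAnn W := by
  ext s
  rw [mem_starSet]
  constructor
  · intro h t ht
    obtain ⟨h1, h2⟩ := h t ht
    exact ⟨h2, by rwa [star_star] at h1⟩
  · intro h t ht
    obtain ⟨h1, h2⟩ := h t ht
    exact ⟨by rwa [star_star], h1⟩

lemma lAnn_starclosed_nAnn (hp : ∀ s : S, star s * s = 0 → s = 0) {V A : Set S}
    (hA : A = lAnn V) (hstar : starSet A = A) : A = nAnn V := by
  subst hA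
  ext s
  constructor
  · intro hs t ht u
    have h2 : u * s ∈ lAnn V := by
      intro v hv
      rw [star_mul, ← mul_assoc, hs v hv, zero_mul]
    have h3 : star (u * s) ∈ lAnn V := by
      apply mem_starSet.1
      rw [hstar]
      exact h2
    have h4 := h3 t ht
    rw [star_star] at h4
    rw [mul_assoc]
    exact h4
  · intro hs v hv
    exact cancel_right' hp (hs v hv (star s))

lemma pAnn_leftclosed_nAnn (hp : ∀ s : S, star s * s = 0 → s = 0) {W A : Set S}
    (hA : A = pAnn W) (hleft : ∀ u : S, ∀ t ∈ A, u * t ∈ A) : A = nAnn W := by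
  subst hA
  ext s
  constructor
  · intro hs t ht u
    rw [mul_assoc]
    exact ((hleft u s hs) t ht).2
  · intro hs t ht
    have hstar : star s ∈ nAnn W := nAnn_star hp hs
    exact ⟨cancel_right' hp (hs t ht (star s)), cancel_right hp (hstar t ht s)⟩

lemma sInter_ann {C : S → S → Prop} (ann : Set S → Set S)
    (hann : ∀ T, ann T = {s | ∀ t ∈ T, C t s})
    (𝒜 : Set (Set S)) (h : ∀ A ∈ 𝒜, ∃ T, A = ann T) :
    ∃ T, ⋂₀ 𝒜 = ann T := by
  choose f hf using h
  refine ⟨⋃ (A : Set S) (hA : A ∈ 𝒜), f A hA, ?_⟩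
  rw [hann]
  ext s
  simp only [Set.mem_sInter, Set.mem_setOf_eq, Set.mem_iUnion]
  constructor
  · rintro hs t ⟨A, hA, ht⟩
    have h1 := hs A hA
    rw [hf A hA, hann] at h1
    exact h1 t ht
  · intro hs A hA
    rw [hf A hA, hann]
    exact fun t ht => hs t ⟨A, hA, ht⟩

end


/-- Let `S` be a proper *-semigroup. Then
(i) `P(S)^L`, `P(S)^⊥` and `P(S)^∇` are closed under arbitrary intersections;
(ii) `T ↦ T ∩ T*` is an inclusion-preserving bijection from `P(S)^L` onto `P(S)^⊥`
with inverse `T ↦ √T`, satisfying `T^L ∩ (T^L)* = (T ∩ T*)^⊥` for all `T ∈ P(S)^L`;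
(iii) `P(S)^∇ = P(S)^L ∩ P(S)^⊥ = {T ∈ P(S)^L : T = T*} = {T ∈ P(S)^⊥ : S T ⊆ T}`. -/
theorem stmt_4 {S : Type*} [SemigroupWithZero S] [StarMul S]
    (hproper : ∀ s : S, star s * s = 0 → s = 0) :
    -- (i) closure under arbitrary intersections
    ((∀ 𝒜 : Set (Set S), 𝒜 ⊆ PL S → ⋂₀ 𝒜 ∈ PL S) ∧
     (∀ 𝒜 : Set (Set S), 𝒜 ⊆ Pperp S → ⋂₀ 𝒜 ∈ Pperp S) ∧
     (∀ 𝒜 : Set (Set S), 𝒜 ⊆ Pnabla S → ⋂₀ 𝒜 ∈ Pnabla S)) ∧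
    -- (ii) the mutually inverse inclusion-preserving bijections
    ((∀ T ∈ PL S, T ∩ starSet T ∈ Pperp S ∧ sqrtS (T ∩ starSet T) = T ∧
        lAnn T ∩ starSet (lAnn T) = pAnn (T ∩ starSet T)) ∧
     (∀ U ∈ Pperp S, sqrtS U ∈ PL S ∧ sqrtS U ∩ starSet (sqrtS U) = U) ∧
     (∀ T T' : Set S, T ∈ PL S → T' ∈ PL S → T ⊆ T' → T ∩ starSet T ⊆ T' ∩ starSet T') ∧
     (∀ U U' : Set S, U ∈ Pperp S → U' ∈ Pperp S → U ⊆ U' → sqrtS U ⊆ sqrtS U')) ∧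
    -- (iii)
    (Pnabla S = PL S ∩ Pperp S ∧
     Pnabla S = {T ∈ PL S | starSet T = T} ∧
     Pnabla S = {T ∈ Pperp S | ∀ s : S, ∀ t ∈ T, s * t ∈ T}) := by
  refine ⟨⟨?_, ?_, ?_⟩, ⟨?_, ?_, ?_, ?_⟩, ?_, ?_, ?_⟩
  · exact fun 𝒜 h => sInter_ann lAnn (fun _ => rfl) 𝒜 (fun A hA => h hA)
  · exact fun 𝒜 h =>
      sInter_ann (C := fun t s => t * star s = 0 ∧ t * s = 0) pAnn (fun _ => rfl) 𝒜
        (fun A hA => h hA)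
  · exact fun 𝒜 h =>
      sInter_ann (C := fun t s => ∀ u : S, t * u * s = 0) nAnn (fun _ => rfl) 𝒜
        (fun A hA => h hA)
  · rintro T ⟨V, rfl⟩
    refine ⟨⟨V, (pAnn_eq V).symm⟩, sqrt_inter hproper V, ?_⟩
    rw [← pAnn_eq (lAnn V), pAnn_inter hproper V]
  · rintro U ⟨W, rfl⟩
    refine ⟨⟨W, sqrt_pAnn hproper W⟩, ?_⟩
    rw [sqrt_pAnn hproper W, ← pAnn_eq W]
  · intro T T' _ _ h
    exact Set.inter_subset_inter h (Set.image_mono h)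
  · intro U U' _ _ h s hs
    exact h hs
  · apply Set.Subset.antisymm
    · rintro A ⟨T, rfl⟩
      exact ⟨⟨_, nAnn_eq_lAnn hproper T⟩, ⟨_, nAnn_eq_pAnn hproper T⟩⟩
    · rintro A ⟨⟨V, rfl⟩, ⟨W, hW⟩⟩
      refine ⟨V, lAnn_starclosed_nAnn hproper rfl ?_⟩
      rw [hW]
      exact pAnn_starClosed W
  · apply Set.Subset.antisymm
    · rintro A ⟨T, rfl⟩
      exact ⟨⟨_, nAnn_eq_lAnn hproper T⟩, nAnn_starClosed hproper T⟩
    · rintro A ⟨⟨V, rfl⟩, hstar⟩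
      exact ⟨V, lAnn_starclosed_nAnn hproper rfl hstar⟩
  · apply Set.Subset.antisymm
    · rintro A ⟨T, rfl⟩
      exact ⟨⟨_, nAnn_eq_pAnn hproper T⟩, fun u t ht => nAnn_left ht u⟩
    · rintro A ⟨⟨W, rfl⟩, hleft⟩
      exact ⟨W, pAnn_leftclosed_nAnn hproper rfl hleft⟩

end Stmt4
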